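/- Let p ∈ ℝ⟨x⟩ be symmetric, let A ∈ 𝕊ₙ(ℝ) be positive definite, suppose A − p(X) is positive semidefinite and v is a nonzero vector with (A − p(X))v = 0. Then for each ε > 0 there exists a positive definite A_ε ∈ 𝕊ₙ(ℝ) with ‖A − A_ε‖ < ε such that A_ε − p(X) is positive semidefinite and the kernel of A_ε − p(X) is exactly the span of v. -/

import Mathlib

open scoped BigOperators

noncomputable section

/-- Evaluation of a free polynomial `p ∈ ℝ⟨x₁,…,x_g⟩` at a `g`-tuple of square matrices;
the empty word evaluates to the identity matrix. -/
def evalMat {g : ℕ} {ι : Type} [Fintype ι] [DecidableEq ι]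
    (p : FreeAlgebra ℝ (Fin g)) (X : Fin g → Matrix ι ι ℝ) : Matrix ι ι ℝ :=
  FreeAlgebra.lift ℝ X p

/-- `p` is a hermitian sum of squares: `p = Σⱼ hⱼ* hⱼ`. -/
def IsHermitianSOS {g : ℕ} (p : FreeAlgebra ℝ (Fin g)) : Prop :=
  ∃ (m : ℕ) (h : Fin m → FreeAlgebra ℝ (Fin g)), p = ∑ j, star (h j) * h j

/-- `p` is quasi-convex: `p(0) = 0` and for every positive integer `n` and every
positive definite `A ∈ 𝕊ₙ(ℝ)`, the set `{X ∈ 𝕊ₙ(ℝ^g) : A − p(X) ≻ 0}` is convex. -/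
def IsQuasiConvex {g : ℕ} (p : FreeAlgebra ℝ (Fin g)) : Prop :=
  (∀ n : ℕ, evalMat p (fun _ => (0 : Matrix (Fin n) (Fin n) ℝ)) = 0) ∧
  ∀ n : ℕ, 0 < n → ∀ A : Matrix (Fin n) (Fin n) ℝ, A.PosDef →
    Convex ℝ {X : Fin g → Matrix (Fin n) (Fin n) ℝ |
      (∀ j, (X j).IsSymm) ∧ (A - evalMat p X).PosDef}

/-- The space of free polynomials homogeneous of degree one (linear span of the variables).  -/
def degOne (g : ℕ) : Submodule ℝ (FreeAlgebra ℝ (Fin g)) :=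
  Submodule.span ℝ (Set.range (FreeAlgebra.ι ℝ : Fin g → FreeAlgebra ℝ (Fin g)))

/-- The space of free polynomials of degree at most `k`. -/
def degLE (g k : ℕ) : Submodule ℝ (FreeAlgebra ℝ (Fin g)) :=
  ⨆ i ∈ Finset.range (k + 1), (degOne g) ^ i

/-- `M` has a positive eigenvalue (with corresponding eigenvector). -/
def HasPosEigenvalue {n : ℕ} (M : Matrix (Fin n) (Fin n) ℝ) : Prop :=
  ∃ (lam : ℝ) (v : Fin n → ℝ), 0 < lam ∧ v ≠ 0 ∧ M.mulVec v = lam • v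

/-- The directional derivative `p′(X)[H]`: the coefficient of `t` in `t ↦ p(X + tH)`. -/
def derivEval {g n : ℕ} (p : FreeAlgebra ℝ (Fin g))
    (X H : Fin g → Matrix (Fin n) (Fin n) ℝ) : Matrix (Fin n) (Fin n) ℝ :=
  (FreeAlgebra.lift ℝ
      (fun j => Polynomial.C (X j) + Polynomial.X * Polynomial.C (H j)) p).coeff 1

/-- The Hessian `p″(X)[H]`: twice the coefficient of `t²` in `t ↦ p(X + tH)`. -/
def hessEval {g n : ℕ} (p : FreeAlgebra ℝ (Fin g))
    (X H : Fin g → Matrix (Fin n) (Fin n) ℝ) : Matrix (Fin n) (Fin n) ℝ :=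
  (2 : ℝ) • (FreeAlgebra.lift ℝ
      (fun j => Polynomial.C (X j) + Polynomial.X * Polynomial.C (H j)) p).coeff 2

/-- The constant term of a free polynomial (so that `p(0)` is `constantTerm p` times the
identity matrix). -/
def constantTerm {g : ℕ} (p : FreeAlgebra ℝ (Fin g)) : ℝ :=
  FreeAlgebra.lift ℝ (fun _ : Fin g => (0 : ℝ)) p

/-- Evaluation of a word `w = x_{j₁}⋯x_{j_k}` at a tuple of matrices: `X_{j₁}⋯X_{j_k}`. -/
def wordEval {g n : ℕ} (X : Fin g → Matrix (Fin n) (Fin n) ℝ)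
    (w : FreeMonoid (Fin g)) : Matrix (Fin n) (Fin n) ℝ :=
  (w.toList.map X).prod

open scoped Matrix

set_option maxHeartbeats 1000000 in
set_option synthInstance.maxHeartbeats 400000 in
/-- if `A ≻ 0`, `A − p(X) ⪰ 0` and `(A − p(X))v = 0` with `v ≠ 0`, then for each
`ε > 0` there is a positive definite `A_ε` with `‖A − A_ε‖ < ε` (operator norm), with
`A_ε − p(X) ⪰ 0` and the kernel of `A_ε − p(X)` exactly the span of `v`. -/
theorem stmt_13 (g n : ℕ) (hn : 0 < n) (p : FreeAlgebra ℝ (Fin g)) (hsym : star p = p)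
    (A : Matrix (Fin n) (Fin n) ℝ) (hA : A.PosDef)
    (X : Fin g → Matrix (Fin n) (Fin n) ℝ) (hX : ∀ j, (X j).IsSymm)
    (hps : (A - evalMat p X).PosSemidef)
    (v : Fin n → ℝ) (hv : v ≠ 0) (hker : (A - evalMat p X).mulVec v = 0)
    (eps : ℝ) (heps : 0 < eps) :
    ∃ Aeps : Matrix (Fin n) (Fin n) ℝ, Aeps.PosDef ∧
      ‖Matrix.toEuclideanCLM (𝕜 := ℝ) (A - Aeps)‖ < eps ∧
      (Aeps - evalMat p X).PosSemidef ∧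
      LinearMap.ker (Aeps - evalMat p X).mulVecLin = Submodule.span ℝ {v} := by
  classical
  set S : Matrix (Fin n) (Fin n) ℝ := A - evalMat p X with hSdef
  set c : ℝ := v ⬝ᵥ v with hcdef
  have hc0 : 0 < c := by
    rcases lt_or_eq_of_le (Finset.sum_nonneg fun i _ => mul_self_nonneg (v i)) with h | h
    · exact h
    · exact absurd (dotProduct_self_eq_zero.mp h.symm) hv
  set Q : Matrix (Fin n) (Fin n) ℝ := 1 - c⁻¹ • Matrix.vecMulVec v v with hQdef
  have hvvmul : ∀ w : Fin n → ℝ, (Matrix.vecMulVec v v) *ᵥ w = (v ⬝ᵥ w) • v := by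
    intro w
    funext i
    simp only [Matrix.mulVec, dotProduct, Matrix.vecMulVec_apply, Pi.smul_apply,
      smul_eq_mul]
    rw [Finset.sum_mul]
    exact Finset.sum_congr rfl fun j _ => by ring
  have hQmul : ∀ w : Fin n → ℝ, Q *ᵥ w = w - (c⁻¹ * (v ⬝ᵥ w)) • v := by
    intro w
    rw [hQdef, Matrix.sub_mulVec, Matrix.one_mulVec, Matrix.smul_mulVec, hvvmul,
      smul_smul]
  have hQquad : ∀ w : Fin n → ℝ, w ⬝ᵥ Q *ᵥ w = w ⬝ᵥ w - c⁻¹ * (v ⬝ᵥ w) ^ 2 := by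
    intro w
    rw [hQmul w, dotProduct_sub, dotProduct_smul, smul_eq_mul]
    have : w ⬝ᵥ v = v ⬝ᵥ w := dotProduct_comm w v
    rw [this]; ring
  have hQquad_nonneg : ∀ w : Fin n → ℝ, 0 ≤ w ⬝ᵥ Q *ᵥ w := by
    intro w
    rw [hQquad w]
    have hcs : (v ⬝ᵥ w) ^ 2 ≤ c * (w ⬝ᵥ w) := by
      have h := Finset.sum_mul_sq_le_sq_mul_sq Finset.univ v w
      have hv2 : ∑ i, v i ^ 2 = c := by simp [hcdef, dotProduct, sq]
      have hw2 : ∑ i, w i ^ 2 = w ⬝ᵥ w := by simp [dotProduct, sq]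
      calc (v ⬝ᵥ w) ^ 2 = (∑ i, v i * w i) ^ 2 := rfl
        _ ≤ (∑ i, v i ^ 2) * (∑ i, w i ^ 2) := h
        _ = c * (w ⬝ᵥ w) := by rw [hv2, hw2]
    have : c⁻¹ * (v ⬝ᵥ w) ^ 2 ≤ c⁻¹ * (c * (w ⬝ᵥ w)) :=
      mul_le_mul_of_nonneg_left hcs (le_of_lt (inv_pos.mpr hc0))
    rw [← mul_assoc, inv_mul_cancel₀ (ne_of_gt hc0), one_mul] at this
    linarith
  have hQherm : Q.IsHermitian := by
    refine Matrix.IsHermitian.ext fun i j => ?_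
    simp [hQdef, Matrix.one_apply, Matrix.vecMulVec_apply, mul_comm, eq_comm]
  have hQps : Q.PosSemidef := by
    refine Matrix.PosSemidef.of_dotProduct_mulVec_nonneg hQherm fun w => ?_
    simpa using hQquad_nonneg w
  have hQv : Q *ᵥ v = 0 := by
    rw [hQmul v, ← hcdef, inv_mul_cancel₀ (ne_of_gt hc0), one_smul, sub_self]
  -- choose the perturbation size
  set T := Matrix.toEuclideanCLM (𝕜 := ℝ) Q with hTdef
  set d : ℝ := eps / (2 * (‖T‖ + 1)) with hddef
  have hT1 : (0:ℝ) < ‖T‖ + 1 := by positivity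
  have hd0 : 0 < d := by
    apply div_pos heps
    positivity
  have hdQps : (d • Q).PosSemidef := by
    have hherm2 : (d • Q).IsHermitian := by
      show (d • Q)ᴴ = d • Q
      rw [Matrix.conjTranspose_smul, star_trivial, show Qᴴ = Q from hQherm]
    refine Matrix.PosSemidef.of_dotProduct_mulVec_nonneg hherm2 fun w => ?_
    have : w ⬝ᵥ (d • Q) *ᵥ w = d * (w ⬝ᵥ Q *ᵥ w) := by
      rw [Matrix.smul_mulVec, dotProduct_smul, smul_eq_mul]
    rw [star_trivial, this]
    exact mul_nonneg hd0.le (hQquad_nonneg w)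
  refine ⟨A + d • Q, hA.add_posSemidef hdQps, ?_, ?_, ?_⟩
  · -- norm bound
    have h1 : A - (A + d • Q) = -(d • Q) := by abel
    rw [h1, map_neg, norm_neg, map_smul]
    have hns : ‖d • Matrix.toEuclideanCLM (𝕜 := ℝ) Q‖ = |d| * ‖T‖ := by
      rw [← hTdef]
      exact (norm_smul d T).trans (by rw [Real.norm_eq_abs])
    rw [hns]
    have : |d| * ‖T‖ ≤ d * (‖T‖ + 1) := by
      rw [abs_of_pos hd0]
      exact mul_le_mul_of_nonneg_left (by linarith) hd0.le
    have h2 : d * (‖T‖ + 1) = eps / 2 := by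
      rw [hddef]
      field_simp
    calc |d| * ‖T‖ ≤ d * (‖T‖ + 1) := this
      _ = eps / 2 := h2
      _ < eps := by linarith
  · -- pos semidef
    have h1 : A + d • Q - evalMat p X = S + d • Q := by rw [hSdef]; abel
    rw [h1]
    exact hps.add hdQps
  · -- kernel
    have h1 : A + d • Q - evalMat p X = S + d • Q := by rw [hSdef]; abel
    rw [h1]
    apply le_antisymm
    · intro w hw
      have hw0 : (S + d • Q) *ᵥ w = 0 := hw
      have hsum : w ⬝ᵥ S *ᵥ w + d * (w ⬝ᵥ Q *ᵥ w) = 0 := by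
        have := congrArg (fun u => w ⬝ᵥ u) hw0
        simpa [Matrix.add_mulVec, Matrix.smul_mulVec, dotProduct_add,
          dotProduct_smul] using this
      have hSq : 0 ≤ w ⬝ᵥ S *ᵥ w := by simpa using hps.dotProduct_mulVec_nonneg w
      have hQq0 : w ⬝ᵥ Q *ᵥ w = 0 := by
        have hQq : 0 ≤ d * (w ⬝ᵥ Q *ᵥ w) := mul_nonneg hd0.le (hQquad_nonneg w)
        nlinarith [hQquad_nonneg w]
      have hQw0 : Q *ᵥ w = 0 := by
        have := (hQps.dotProduct_mulVec_zero_iff w).mp (by simpa using hQq0)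
        exact this
      have : w = (c⁻¹ * (v ⬝ᵥ w)) • v := by
        have h2 := hQmul w
        rw [hQw0] at h2
        exact sub_eq_zero.mp h2.symm
      rw [Submodule.mem_span_singleton]
      exact ⟨c⁻¹ * (v ⬝ᵥ w), this.symm⟩
    · rw [Submodule.span_singleton_le_iff_mem]
      have hSv : S *ᵥ v = 0 := hker
      have : (S + d • Q) *ᵥ v = 0 := by
        rw [Matrix.add_mulVec, hSv, Matrix.smul_mulVec, hQv, smul_zero, add_zero]
      exact this
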